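/- Let V = (V_k, E_k) be a regular vine on d elements and e, e' two distinct edges (possibly in different trees). Then the conditioned-set pairs satisfy {a_e, b_e} ≠ {a_{e'}, b_{e'}}; i.e., no unordered pair of variables is the conditioned set of two different edges of the vine. -/

import Mathlib

set_option linter.unusedSectionVars false
set_option maxHeartbeats 1000000


open Finset

variable {α : Type*} [DecidableEq α] [Fintype α]

/-- The simple graph on `α` induced by a finite set of unordered pairs. -/
def graphOf (E : Finset (Sym2 α)) : SimpleGraph α where
  Adj x y := x ≠ y ∧ s(x, y) ∈ E
  symm := by
    constructor
    intro x y h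
    refine ⟨h.1.symm, ?_⟩
    rw [Sym2.eq_swap]
    exact h.2
  loopless := ⟨fun x h => h.1 rfl⟩

lemma graphOf_adj {E : Finset (Sym2 α)} {x y : α} :
    (graphOf E).Adj x y ↔ x ≠ y ∧ s(x, y) ∈ E := Iff.rfl

/-- `(V, E)` is a finite tree: edges join distinct vertices of `V`, the induced
graph is acyclic, and all vertices of `V` are mutually reachable. -/
def IsTreeOn (V : Finset α) (E : Finset (Sym2 α)) : Prop :=
  (∀ e ∈ E, ∀ x ∈ e, x ∈ V) ∧ (∀ e ∈ E, ¬ e.IsDiag) ∧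
    (graphOf E).IsAcyclic ∧ ∀ x ∈ V, ∀ y ∈ V, (graphOf E).Reachable x y

/-- Complete union of an edge: the union of the complete unions of its endpoints
(each vertex of a tree of the vine is identified with its complete union). -/
def eUnion (e : Sym2 (Finset α)) : Finset α :=
  Sym2.lift ⟨fun A B => A ∪ B, fun A B => union_comm A B⟩ e

/-- Conditioning set `D_e` of an edge. -/
def condSet (e : Sym2 (Finset α)) : Finset α :=
  Sym2.lift ⟨fun A B => A ∩ B, fun A B => inter_comm A B⟩ e

/-- Conditioned set `{a_e, b_e}` of an edge. -/
def condPair (e : Sym2 (Finset α)) : Finset α :=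
  Sym2.lift ⟨fun A B => symmDiff A B, fun A B => symmDiff_comm A B⟩ e

/-- A regular vine on a finite set `α` of `d = Fintype.card α` elements.  The
vertices of tree `k` (for `k = 1, …, d-1`) are identified with their complete
unions, subsets of `α`; `V (k+1) = E k` is expressed via complete unions. -/
structure RegularVine (α : Type*) [DecidableEq α] [Fintype α] where
  V : ℕ → Finset (Finset α)
  E : ℕ → Finset (Sym2 (Finset α))
  hV1 : V 1 = Finset.univ.image (fun a : α => ({a} : Finset α))
  hVsucc : ∀ k, 1 ≤ k → V (k + 1) = (E k).image eUnion
  tree : ∀ k, 1 ≤ k → k + 1 ≤ Fintype.card α → IsTreeOn (V k) (E k)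
  hEzero : ∀ k, k = 0 ∨ Fintype.card α ≤ k → E k = ∅
  proximity : ∀ k, 1 ≤ k → ∀ p ∈ E (k + 1),
    ∃ a ∈ E k, ∃ b ∈ E k, p = s(eUnion a, eUnion b) ∧ ∃ v, v ∈ a ∧ v ∈ b

/-- A tree `(V, E)` is a path: it is a tree and every vertex has degree at most 2. -/
def IsPathOn (V : Finset α) (E : Finset (Sym2 α)) : Prop :=
  IsTreeOn V E ∧ ∀ v ∈ V, (E.filter (fun e => v ∈ e)).card ≤ 2

/-- A permutation `(i_1, …, i_d) = (σ 0, …, σ (d-1))` is compatible with a vine on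
`Fin d`: for every `k` there is an edge of tree `k` with conditioned set
`{σ k, σ r}` (some `r < k`) and conditioning set `{σ 0, …, σ (k-1)} \ {σ r}`. -/
def Compatible {d : ℕ} (𝒱 : RegularVine (Fin d)) (σ : Fin d → Fin d) : Prop :=
  ∀ k : Fin d, 1 ≤ (k : ℕ) → ∃ r : Fin d, r < k ∧ ∃ e ∈ 𝒱.E (k : ℕ),
    condPair e = {σ k, σ r} ∧
    condSet e = ((Finset.univ.filter (fun s : Fin d => s < k)).image σ).erase (σ r)


-- auxiliary development

lemma eUnion_mk (A B : Finset α) : eUnion s(A, B) = A ∪ B := rfl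

lemma condPair_mk (A B : Finset α) : condPair s(A, B) = (A \ B) ∪ (B \ A) := by
  show symmDiff A B = _
  rw [symmDiff_def]
  rfl

lemma subset_eUnion_of_mem {v : Finset α} {e : Sym2 (Finset α)} (h : v ∈ e) : v ⊆ eUnion e := by
  induction e using Sym2.ind with
  | _ A B =>
    rw [Sym2.mem_iff] at h
    rcases h with rfl | rfl
    · exact subset_union_left
    · exact subset_union_right

instance (E : Finset (Sym2 α)) : DecidableRel (graphOf E).Adj := fun x y => decidable_of_iff _ graphOf_adj.symm

lemma treeOn_exists_edge {V : Finset α} {E : Finset (Sym2 α)} (h : IsTreeOn V E)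
    {x y : α} (hx : x ∈ V) (hy : y ∈ V) (hxy : x ≠ y) : ∃ e ∈ E, x ∈ e := by
  obtain ⟨w⟩ := h.2.2.2 x hx y hy
  cases w with
  | nil => exact absurd rfl hxy
  | cons hadj w' => exact ⟨_, (graphOf_adj.mp hadj).2, Sym2.mem_mk_left _ _⟩

-- part 2
lemma walk_support_mem {V : Finset α} {E : Finset (Sym2 α)}
    (hEV : ∀ e ∈ E, ∀ x ∈ e, x ∈ V) :
    ∀ {x y : α}, x ∈ V → (w : (graphOf E).Walk x y) → ∀ z ∈ w.support, z ∈ V := by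
  intro x y hx w
  induction w with
  | nil => intro z hz; rw [SimpleGraph.Walk.support_nil, List.mem_singleton] at hz; rwa [hz]
  | @cons a b c hadj w' ih =>
    intro z hz
    rw [SimpleGraph.Walk.support_cons, List.mem_cons] at hz
    rcases hz with rfl | hz
    · exact hEV _ (graphOf_adj.mp hadj).2 _ (Sym2.mem_mk_left _ _)
    · exact ih (hEV _ (graphOf_adj.mp hadj).2 _ (Sym2.mem_mk_right _ _)) z hz

theorem isTreeOn_card {V : Finset α} {E : Finset (Sym2 α)} (h : IsTreeOn V E)
    (hV : V.Nonempty) : E.card + 1 = V.card := by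
  classical
  obtain ⟨hEV, hdiag, hacyc, hconn⟩ := h
  set G := graphOf E with hG
  set s : Set α := ↑V with hs
  have hconn' : (G.induce s).Connected := by
    rw [SimpleGraph.connected_iff]
    refine ⟨?_, ⟨⟨hV.choose, hV.choose_spec⟩⟩⟩
    rintro ⟨x, hx⟩ ⟨y, hy⟩
    obtain ⟨w⟩ := hconn x hx y hy
    have hsub : {v | v ∈ w.support} ⊆ s := fun z hz => walk_support_mem hEV hx w z hz
    have hreach := (w.connected_induce_support).preconnected
      ⟨x, w.start_mem_support⟩ ⟨y, w.end_mem_support⟩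
    exact hreach.map (SimpleGraph.induceHomOfLE G hsub).toHom
  have hacyc' : (G.induce s).IsAcyclic := by
    intro v c hc
    have := hc.map (f := (SimpleGraph.Embedding.induce (G := G) s).toHom)
      (SimpleGraph.Embedding.induce (G := G) s).injective
    exact hacyc _ this
  have htree : (G.induce s).IsTree := ⟨hconn', hacyc'⟩
  have hcount := htree.card_edgeFinset
  have hcard : Fintype.card ↑s = V.card := Fintype.card_coe V
  rw [hcard] at hcount
  rw [← hcount]
  congr 1
  refine (Finset.card_bij (fun e _ => Sym2.map Subtype.val e) ?_ ?_ ?_).symm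
  · intro e he
    rw [SimpleGraph.mem_edgeFinset] at he
    induction e using Sym2.ind with
    | _ a b => exact (graphOf_adj.mp he).2
  · intro e₁ h₁ e₂ h₂ hee
    exact Sym2.map.injective Subtype.val_injective hee
  · intro e he
    induction e using Sym2.ind with
    | _ x y =>
      have hx : x ∈ V := hEV _ he _ (Sym2.mem_mk_left _ _)
      have hy : y ∈ V := hEV _ he _ (Sym2.mem_mk_right _ _)
      have hxy : x ≠ y := by
        intro hh; exact hdiag _ he (by rw [Sym2.mk_isDiag_iff]; exact hh)
      refine ⟨s(⟨x, hx⟩, ⟨y, hy⟩), ?_, rfl⟩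
      rw [SimpleGraph.mem_edgeFinset]
      exact graphOf_adj.mpr ⟨fun hc => hxy hc, he⟩

-- part 3 : vine structure
namespace RegularVine

variable {d : ℕ} (𝒱 : RegularVine (Fin d))

lemma treeFin (k : ℕ) (h1 : 1 ≤ k) (h2 : k + 1 ≤ d) : IsTreeOn (𝒱.V k) (𝒱.E k) :=
  𝒱.tree k h1 (by rwa [Fintype.card_fin])

lemma vine_struct : ∀ k, 1 ≤ k → k + 1 ≤ d →
    (∀ A ∈ 𝒱.V k, A.card = k) ∧
    (∀ A B : Finset (Fin d), s(A, B) ∈ 𝒱.E k →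
      A ∈ 𝒱.V k ∧ B ∈ 𝒱.V k ∧ A ≠ B ∧ A.card = k ∧ B.card = k ∧ (A ∩ B).card = k - 1) := by
  intro k
  induction k with
  | zero => omega
  | succ k ih =>
    intro _ hk2
    -- vertex part at k+1
    have hvert : ∀ A ∈ 𝒱.V (k + 1), A.card = k + 1 := by
      rcases Nat.eq_zero_or_pos k with rfl | hk
      · intro A hA
        rw [𝒱.hV1, mem_image] at hA
        obtain ⟨a, _, rfl⟩ := hA
        exact card_singleton a
      · have ihk := ih hk (by omega)
        intro A hA
        rw [𝒱.hVsucc k hk, mem_image] at hA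
        obtain ⟨e, he, rfl⟩ := hA
        induction e using Sym2.ind with
        | _ P Q =>
          obtain ⟨_, _, _, hP, hQ, hPQ⟩ := ihk.2 P Q he
          rw [eUnion_mk]
          have := Finset.card_union_add_card_inter P Q
          omega
    refine ⟨hvert, ?_⟩
    intro A B hAB
    have htr := 𝒱.treeFin (k+1) (by omega) hk2
    have hA : A ∈ 𝒱.V (k+1) := htr.1 _ hAB _ (Sym2.mem_mk_left _ _)
    have hB : B ∈ 𝒱.V (k+1) := htr.1 _ hAB _ (Sym2.mem_mk_right _ _)
    have hne : A ≠ B := by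
      intro hh
      exact htr.2.1 _ hAB (by rw [Sym2.mk_isDiag_iff]; exact hh)
    have hcA : A.card = k + 1 := hvert A hA
    have hcB : B.card = k + 1 := hvert B hB
    refine ⟨hA, hB, hne, hcA, hcB, ?_⟩
    have hub : (A ∩ B).card ≤ k := by
      by_contra hgt
      push_neg at hgt
      have h1 : (A ∩ B).card ≤ A.card := card_le_card inter_subset_left
      have h2 : A ∩ B = A := eq_of_subset_of_card_le inter_subset_left (by omega)
      have h3 : A ⊆ B := by rw [← h2]; exact inter_subset_right
      exact hne (eq_of_subset_of_card_le h3 (by omega))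
    rcases Nat.eq_zero_or_pos k with rfl | hk
    · omega
    · -- lower bound via proximity
      obtain ⟨a, ha, b, hb, heq, v, hva, hvb⟩ := 𝒱.proximity k hk _ hAB
      have ihk := ih hk (by omega)
      have htrk := 𝒱.treeFin k hk (by omega)
      have hvV : v ∈ 𝒱.V k := htrk.1 _ ha _ hva
      have hvc : v.card = k := ihk.1 v hvV
      have hsub : v ⊆ A ∩ B := by
        rw [Sym2.eq_iff] at heq
        have h1 := subset_eUnion_of_mem hva
        have h2 := subset_eUnion_of_mem hvb
        rcases heq with h | h <;>
        · obtain ⟨h3, h4⟩ := h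
          subst h3; subst h4
          first
          | exact subset_inter h1 h2
          | exact subset_inter h2 h1
      have := card_le_card hsub
      omega

lemma edge_data (k : ℕ) (h1 : 1 ≤ k) (h2 : k + 1 ≤ d) {A B : Finset (Fin d)}
    (h : s(A, B) ∈ 𝒱.E k) :
    A.card = k ∧ B.card = k ∧ (A ∩ B).card = k - 1 ∧ (A ∪ B).card = k + 1 ∧
      (A \ B).card = 1 ∧ (B \ A).card = 1 ∧ A ≠ B := by
  obtain ⟨_, _, hne, hA, hB, hI⟩ := (𝒱.vine_struct k h1 h2).2 A B h
  have hu := Finset.card_union_add_card_inter A B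
  have h3 : (A \ B).card + (A ∩ B).card = A.card := Finset.card_sdiff_add_card_inter A B
  have h4 : (B \ A).card + (B ∩ A).card = B.card := Finset.card_sdiff_add_card_inter B A
  rw [inter_comm] at h4
  exact ⟨hA, hB, hI, by omega, by omega, by omega, hne⟩

lemma condPair_card (k : ℕ) (h1 : 1 ≤ k) (h2 : k + 1 ≤ d) {e : Sym2 (Finset (Fin d))}
    (he : e ∈ 𝒱.E k) : (condPair e).card = 2 ∧ (eUnion e).card = k + 1 := by
  induction e using Sym2.ind with
  | _ A B =>
    obtain ⟨hA, hB, hI, hU, hAB, hBA, hne⟩ := 𝒱.edge_data k h1 h2 he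
    rw [condPair_mk, eUnion_mk]
    refine ⟨?_, hU⟩
    rw [card_union_of_disjoint (disjoint_sdiff_sdiff)]
    omega

lemma cover : ∀ k, 1 ≤ k → k + 1 ≤ d → ∀ x : Fin d, ∃ A ∈ 𝒱.V k, x ∈ A := by
  intro k
  induction k with
  | zero => omega
  | succ k ih =>
    intro _ h2 x
    rcases Nat.eq_zero_or_pos k with rfl | hk
    · refine ⟨{x}, ?_, mem_singleton_self x⟩
      rw [𝒱.hV1]
      exact mem_image_of_mem _ (mem_univ x)
    · obtain ⟨A, hA, hxA⟩ := ih hk (by omega) x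
      have hAc : A.card = k := (𝒱.vine_struct k hk (by omega)).1 A hA
      have hcompl : (Aᶜ : Finset (Fin d)).Nonempty := by
        rw [← card_pos, card_compl, Fintype.card_fin]
        omega
      obtain ⟨y, hy⟩ := hcompl
      rw [mem_compl] at hy
      obtain ⟨B, hB, hyB⟩ := ih hk (by omega) y
      have hne : A ≠ B := fun h => hy (h ▸ hyB)
      obtain ⟨e, he, hAe⟩ :=
        treeOn_exists_edge (𝒱.treeFin k hk (by omega)) hA hB hne
      refine ⟨eUnion e, ?_, subset_eUnion_of_mem hAe hxA⟩
      rw [𝒱.hVsucc k hk]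
      exact mem_image_of_mem _ he

lemma E_nonempty (k : ℕ) (h1 : 1 ≤ k) (h2 : k + 1 ≤ d) : (𝒱.E k).Nonempty := by
  have hx : (0 : ℕ) < d := by omega
  obtain ⟨A, hA, hxA⟩ := 𝒱.cover k h1 h2 ⟨0, hx⟩
  have hAc : A.card = k := (𝒱.vine_struct k h1 h2).1 A hA
  have hcompl : (Aᶜ : Finset (Fin d)).Nonempty := by
    rw [← card_pos, card_compl, Fintype.card_fin]
    omega
  obtain ⟨y, hy⟩ := hcompl
  rw [mem_compl] at hy
  obtain ⟨B, hB, hyB⟩ := 𝒱.cover k h1 h2 y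
  have hne : A ≠ B := fun h => hy (h ▸ hyB)
  obtain ⟨e, he, _⟩ := treeOn_exists_edge (𝒱.treeFin k h1 h2) hA hB hne
  exact ⟨e, he⟩

lemma E_card : ∀ k, 1 ≤ k → k + 1 ≤ d → (𝒱.E k).card + k ≤ d := by
  intro k
  induction k with
  | zero => omega
  | succ k ih =>
    intro _ h2
    rcases Nat.eq_zero_or_pos k with rfl | hk
    · show (𝒱.E 1).card + 1 ≤ d
      have hV1ne : (𝒱.V 1).Nonempty := by
        obtain ⟨A, hA, _⟩ := 𝒱.cover 1 le_rfl h2 ⟨0, by omega⟩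
        exact ⟨A, hA⟩
      have htc := isTreeOn_card (𝒱.treeFin 1 le_rfl h2) hV1ne
      have hV1c : (𝒱.V 1).card = d := by
        rw [𝒱.hV1, card_image_of_injective _ Finset.singleton_injective, card_univ,
          Fintype.card_fin]
      omega

    · have hVne : (𝒱.V (k+1)).Nonempty := by
        obtain ⟨A, hA, _⟩ := 𝒱.cover (k+1) (by omega) h2 ⟨0, by omega⟩
        exact ⟨A, hA⟩
      have htc := isTreeOn_card (𝒱.treeFin (k+1) (by omega) h2) hVne
      have himg : (𝒱.V (k+1)).card ≤ (𝒱.E k).card := by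
        rw [𝒱.hVsucc k hk]
        exact card_image_le
      have := ih hk (by omega)
      omega

lemma pair_exists : ∀ k, 1 ≤ k → k + 1 ≤ d → ∀ e ∈ 𝒱.E k, ∀ x y : Fin d,
    x ∈ eUnion e → y ∈ eUnion e → x ≠ y →
    ∃ j, 1 ≤ j ∧ j ≤ k ∧ ∃ f ∈ 𝒱.E j, condPair f = {x, y} := by
  intro k
  induction k with
  | zero => omega
  | succ k ih =>
    intro _ h2 e he x y hx hy hxy
    rcases Nat.eq_zero_or_pos k with rfl | hk
    · -- base: tree 1
      induction e using Sym2.ind with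
      | _ A B =>
        obtain ⟨hA, hB, hI, hU, hAB, hBA, hne⟩ := 𝒱.edge_data 1 le_rfl h2 he
        rw [eUnion_mk] at hx hy
        have hsub : ({x, y} : Finset (Fin d)) ⊆ A ∪ B := by
          intro z hz
          rw [mem_insert, mem_singleton] at hz
          rcases hz with rfl | rfl <;> assumption
        have hc2 : ({x, y} : Finset (Fin d)).card = 2 := card_pair hxy
        have heq : ({x, y} : Finset (Fin d)) = A ∪ B :=
          eq_of_subset_of_card_le hsub (by omega)
        have hdisj : Disjoint A B := by
          rw [disjoint_iff_inter_eq_empty, ← card_eq_zero]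
          omega
        refine ⟨1, le_rfl, le_rfl, s(A, B), he, ?_⟩
        rw [condPair_mk, sdiff_eq_self_of_disjoint hdisj,
          sdiff_eq_self_of_disjoint hdisj.symm, ← heq]
    · -- step
      obtain ⟨a, ha, b, hb, heq, v, hva, hvb⟩ := 𝒱.proximity k hk e he
      subst heq
      rw [eUnion_mk] at hx hy
      obtain ⟨hcA, hcB, hI, hU, hAB, hBA, hne⟩ := 𝒱.edge_data (k+1) (by omega) h2 he
      rw [mem_union] at hx hy
      by_cases hxA : x ∈ eUnion a
      · by_cases hyA : y ∈ eUnion a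
        · obtain ⟨j, hj1, hj2, hf⟩ := ih hk (by omega) a ha x y hxA hyA hxy
          exact ⟨j, hj1, by omega, hf⟩
        · have hyB : y ∈ eUnion b := hy.resolve_left hyA
          by_cases hxB : x ∈ eUnion b
          · obtain ⟨j, hj1, hj2, hf⟩ := ih hk (by omega) b hb x y hxB hyB hxy
            exact ⟨j, hj1, by omega, hf⟩
          · refine ⟨k + 1, by omega, le_rfl, s(eUnion a, eUnion b), he, ?_⟩
            have h1 : eUnion a \ eUnion b = {x} := by
              obtain ⟨c, hc⟩ := card_eq_one.mp hAB
              have : x ∈ eUnion a \ eUnion b := mem_sdiff.mpr ⟨hxA, hxB⟩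
              rw [hc] at this ⊢
              rw [mem_singleton] at this
              rw [this]
            have h2' : eUnion b \ eUnion a = {y} := by
              obtain ⟨c, hc⟩ := card_eq_one.mp hBA
              have : y ∈ eUnion b \ eUnion a := mem_sdiff.mpr ⟨hyB, hyA⟩
              rw [hc] at this ⊢
              rw [mem_singleton] at this
              rw [this]
            rw [condPair_mk, h1, h2']
            ext z
            simp
      · have hxB : x ∈ eUnion b := hx.resolve_left hxA
        by_cases hyB : y ∈ eUnion b
        · obtain ⟨j, hj1, hj2, hf⟩ := ih hk (by omega) b hb x y hxB hyB hxy
          exact ⟨j, hj1, by omega, hf⟩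
        · have hyA : y ∈ eUnion a := hy.resolve_right hyB
          refine ⟨k + 1, by omega, le_rfl, s(eUnion a, eUnion b), he, ?_⟩
          have h1 : eUnion a \ eUnion b = {y} := by
            obtain ⟨c, hc⟩ := card_eq_one.mp hAB
            have : y ∈ eUnion a \ eUnion b := mem_sdiff.mpr ⟨hyA, hyB⟩
            rw [hc] at this ⊢
            rw [mem_singleton] at this
            rw [this]
          have h2' : eUnion b \ eUnion a = {x} := by
            obtain ⟨c, hc⟩ := card_eq_one.mp hBA
            have : x ∈ eUnion b \ eUnion a := mem_sdiff.mpr ⟨hxB, hxA⟩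
            rw [hc] at this ⊢
            rw [mem_singleton] at this
            rw [this]
          rw [condPair_mk, h1, h2']
          ext z
          simp [or_comm]

end RegularVine



/-- No unordered pair of variables is the conditioned set of two different edges of
a regular vine: distinct edges (possibly in different trees) have distinct
conditioned pairs. -/
theorem vine_condPair_injective {d : ℕ} (𝒱 : RegularVine (Fin d)) :
    ∀ k k' : ℕ, 1 ≤ k → k ≤ d - 1 → 1 ≤ k' → k' ≤ d - 1 →
      ∀ e ∈ 𝒱.E k, ∀ e' ∈ 𝒱.E k', (k, e) ≠ (k', e') →
        condPair e ≠ condPair e' := by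

  intro k k' hk1 hk2 hk'1 hk'2 e he e' he' hne hcp
  have hd : 2 ≤ d := by omega
  set S : Finset (ℕ × Sym2 (Finset (Fin d))) :=
    (Finset.Icc 1 (d-1)).biUnion (fun j => (𝒱.E j).image (fun f => (j, f))) with hS
  have hmemS : ∀ j (f : Sym2 (Finset (Fin d))), (j, f) ∈ S ↔ (1 ≤ j ∧ j ≤ d - 1 ∧ f ∈ 𝒱.E j) := by
    intro j f
    rw [hS, mem_biUnion]
    constructor
    · rintro ⟨j', hj', hf⟩
      rw [mem_image] at hf
      obtain ⟨f', hf', heq⟩ := hf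
      obtain ⟨h1, h2⟩ := Prod.ext_iff.mp heq
      rw [mem_Icc] at hj'
      subst h1; subst h2
      exact ⟨hj'.1, hj'.2, hf'⟩
    · rintro ⟨h1, h2, h3⟩
      exact ⟨j, mem_Icc.mpr ⟨h1, h2⟩, mem_image_of_mem _ h3⟩
  set P2 : Finset (Finset (Fin d)) := Finset.univ.powersetCard 2 with hP2
  have hcards : S.card ≤ P2.card := by
    have h1 : S.card = ∑ j ∈ Finset.Icc 1 (d-1), (𝒱.E j).card := by
      rw [hS, card_biUnion]
      · exact Finset.sum_congr rfl fun j _ =>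
          card_image_of_injective _ (fun f g h => (Prod.ext_iff.mp h).2)
      · intro j hj j' hj' hjj'
        simp only [Function.onFun]
        rw [disjoint_left]
        intro p hp hp'
        rw [mem_image] at hp hp'
        obtain ⟨f, _, rfl⟩ := hp
        obtain ⟨f', _, heq⟩ := hp'
        exact hjj' ((Prod.ext_iff.mp heq).1.symm)
    have h2 : (∑ j ∈ Finset.Icc 1 (d-1), (𝒱.E j).card) ≤ ∑ j ∈ Finset.Icc 1 (d-1), (d - j) := by
      refine Finset.sum_le_sum ?_
      intro j hj
      rw [mem_Icc] at hj
      have := 𝒱.E_card j hj.1 (by omega)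
      omega
    have h3 : (∑ j ∈ Finset.Icc 1 (d-1), (d - j)) = ∑ j ∈ Finset.Icc 1 (d-1), j := by
      refine Finset.sum_nbij' (fun j => d - j) (fun j => d - j) ?_ ?_ ?_ ?_ ?_
      · intro a ha; rw [mem_Icc] at ha ⊢; omega
      · intro a ha; rw [mem_Icc] at ha ⊢; omega
      all_goals intro a ha
      all_goals rw [mem_Icc] at ha
      all_goals first
      | rfl
      | omega
    have h4 : (∑ j ∈ Finset.Icc 1 (d-1), j) * 2 = d * (d - 1) := by
      have hins : insert 0 (Finset.Icc 1 (d-1)) = Finset.range d := by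
        ext j
        simp only [mem_insert, mem_Icc, mem_range]
        omega
      have h0 : (0 : ℕ) ∉ Finset.Icc 1 (d-1) := by rw [mem_Icc]; omega
      have := Finset.sum_range_id_mul_two d
      rw [← hins, Finset.sum_insert h0] at this
      omega
    have h5 : P2.card = d.choose 2 := by
      rw [hP2, card_powersetCard, card_univ, Fintype.card_fin]
    have h6 : d.choose 2 = d * (d - 1) / 2 := Nat.choose_two_right d
    omega
  have hf : ∀ (p : ℕ × Sym2 (Finset (Fin d))), p ∈ S → condPair p.2 ∈ P2 := by
    rintro ⟨j, f⟩ hp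
    rw [hmemS] at hp
    obtain ⟨h1, h2, h3⟩ := hp
    rw [hP2, Finset.mem_powersetCard]
    exact ⟨subset_univ _, (𝒱.condPair_card j h1 (by omega) h3).1⟩
  have hsurj : ∀ p ∈ P2, ∃ q ∈ S, condPair q.2 = p := by
    intro p hp
    rw [hP2, Finset.mem_powersetCard] at hp
    obtain ⟨x, y, hxy, rfl⟩ := Finset.card_eq_two.mp hp.2
    obtain ⟨etop, hetop⟩ := 𝒱.E_nonempty (d-1) (by omega) (by omega)
    have htopc : (eUnion etop).card = d := by
      have := (𝒱.condPair_card (d-1) (by omega) (by omega) hetop).2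
      omega
    have htop : eUnion etop = Finset.univ := by
      apply Finset.eq_univ_of_card
      rw [htopc, Fintype.card_fin]
    obtain ⟨j, hj1, hj2, f, hf', hcf⟩ := 𝒱.pair_exists (d-1) (by omega) (by omega) etop hetop x y
      (htop ▸ mem_univ x) (htop ▸ mem_univ y) hxy
    exact ⟨(j, f), (hmemS j f).mpr ⟨hj1, by omega, hf'⟩, hcf⟩
  have hinj := Finset.inj_on_of_surj_on_of_card_le
    (s := S) (t := P2) (fun p _ => condPair p.2)
    (fun p hp => hf p hp)
    (fun b hb => by
      obtain ⟨q, hq, hqe⟩ := hsurj b hb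
      exact ⟨q, hq, hqe⟩)
    hcards
  have hmem1 : (k, e) ∈ S := (hmemS k e).mpr ⟨hk1, hk2, he⟩
  have hmem2 : (k', e') ∈ S := (hmemS k' e').mpr ⟨hk'1, hk'2, he'⟩
  exact hne (hinj hmem1 hmem2 hcp)
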